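/- For d = 1, define the dividend yield δ = D/X for the single-factor model dX = (rX − D)dt + σ(X − D/a)dW, dD = (bX + βD)dt + ν₁√(D(X − D/a))dB with independent Brownian motions W, B and X > 0, 0 ≤ D ≤ aX. Then by Itô's formula δ satisfies dδ = (b + (β − r)δ + δ² + σ²δ(1 − δ/a)²)dt − σδ(1 − δ/a)dW + ν₁√(δ(1 − δ/a))dB, and in particular δ is an autonomous diffusion taking values in [0, a]. -/

import Mathlib

/-- The Itô coefficients of the dividend yield `δ = D/X` in the single-factor model:
the transformed drift and diffusion coefficients are functions of `δ` alone, and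
`0 ≤ δ ≤ a`. Here the drift of `δ` is
`f_x·μ_X + f_D·μ_D + ½ f_xx·σ_X²` for `f(x,D) = D/x` (the Brownian motions `W` and
`B` being independent, there is no cross term, and `f_DD = 0`). -/
theorem dividend_yield_sde (a σ b β r ν₁ : ℝ) (ha : 0 < a) :
    ∀ x dd : ℝ, 0 < x → 0 ≤ dd → dd ≤ a * x →
      0 ≤ dd / x ∧ dd / x ≤ a ∧
      (-(dd / x ^ 2)) * (r * x - dd) + (1 / x) * (b * x + β * dd) +
          (1 / 2) * (2 * dd / x ^ 3) * (σ * (x - dd / a)) ^ 2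
        = b + (β - r) * (dd / x) + (dd / x) ^ 2 +
            σ ^ 2 * (dd / x) * (1 - (dd / x) / a) ^ 2 ∧
      (-(dd / x ^ 2)) * (σ * (x - dd / a)) = -(σ * (dd / x) * (1 - (dd / x) / a)) ∧
      (1 / x) * (ν₁ * Real.sqrt (dd * (x - dd / a)))
        = ν₁ * Real.sqrt ((dd / x) * (1 - (dd / x) / a)) := by
  intro x dd hx hd hda
  have hx0 : x ≠ 0 := ne_of_gt hx
  have ha0 : a ≠ 0 := ne_of_gt ha
  refine ⟨div_nonneg hd hx.le, ?_, ?_, ?_, ?_⟩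
  · rw [div_le_iff₀ hx]; linarith
  · field_simp; ring
  · field_simp
  · have key : (dd / x) * (1 - (dd / x) / a) = (dd * (x - dd / a)) / x ^ 2 := by
      field_simp
    have hnum : 0 ≤ dd * (x - dd / a) := by
      apply mul_nonneg hd
      rw [sub_nonneg, div_le_iff₀ ha]
      linarith [hda]
    rw [key, Real.sqrt_div hnum, Real.sqrt_sq hx.le]
    ring
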